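/- arXiv:2010.08967 — 3 statements merged into one kernel-verified Lean document; each statement's English description precedes it below -/
import Mathlib

section
/- Let f(q) = -1 + \sum_{n\ge 1} a(n) q^n be a formal power series with all a(n) > 0. If a(1) > k and a(n) > k for all n \ge 2, then every coefficient of q^n for n \ge 1 in the series f(q) / \prod_{m=1}^{\infty}(1 - q^m)^k is positive. -/
open PowerSeries Finset

private noncomputable def Bf (m : ℕ) : PowerSeries ℚ := (1 - X ^ m)⁻¹

private lemma constBf (m : ℕ) (hm : 1 ≤ m) :
    constantCoeff (R := ℚ) (1 - X ^ m : PowerSeries ℚ) = 1 := by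
  simp [map_pow, constantCoeff_X, zero_pow (by omega : m ≠ 0)]

private lemma Bf_eq (m : ℕ) (hm : 1 ≤ m) : Bf m = 1 + X ^ m * Bf m := by
  have h : (1 - X ^ m : PowerSeries ℚ) * Bf m = 1 :=
    PowerSeries.mul_inv_cancel _ (by rw [constBf m hm]; norm_num)
  linear_combination h

private lemma coeff_Xpow_mul (m n : ℕ) (ψ : PowerSeries ℚ) :
    coeff (R := ℚ) n (X ^ m * ψ) = if m ≤ n then coeff (R := ℚ) (n - m) ψ else 0 := by
  rw [mul_comm, PowerSeries.coeff_mul_X_pow']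

private def NN (φ : PowerSeries ℚ) : Prop := ∀ i, 0 ≤ coeff (R := ℚ) i φ

private lemma NN_one : NN 1 := by
  intro i; rw [coeff_one]; positivity

private lemma NN_mul {φ ψ} (hφ : NN φ) (hψ : NN ψ) : NN (φ * ψ) := by
  intro i; rw [coeff_mul]
  exact Finset.sum_nonneg fun p _ => mul_nonneg (hφ _) (hψ _)

private lemma NN_Bf (m : ℕ) (hm : 1 ≤ m) : NN (Bf m) := by
  intro i
  induction i using Nat.strong_induction_on with
  | _ i ih =>
    rw [Bf_eq m hm, map_add, coeff_Xpow_mul, coeff_one]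
    have h1 : (0:ℚ) ≤ if i = 0 then (1:ℚ) else 0 := by positivity
    have h2 : (0:ℚ) ≤ if m ≤ i then coeff (R := ℚ) (i - m) (Bf m) else 0 := by
      split
      · exact ih _ (by omega)
      · exact le_refl 0
    linarith

private lemma coeff_Bf_mul (m : ℕ) (hm : 1 ≤ m) (ψ : PowerSeries ℚ) (n : ℕ) :
    coeff (R := ℚ) n (Bf m * ψ) =
      coeff (R := ℚ) n ψ + (if m ≤ n then coeff (R := ℚ) (n - m) (Bf m * ψ) else 0) := by
  conv_lhs => rw [Bf_eq m hm]
  rw [add_mul, one_mul, map_add, mul_assoc, coeff_Xpow_mul]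

private lemma mono_Bf (m : ℕ) (hm : 1 ≤ m) {ψ : PowerSeries ℚ} (hψ : NN ψ) (n : ℕ) :
    coeff (R := ℚ) n ψ ≤ coeff (R := ℚ) n (Bf m * ψ) := by
  rw [coeff_Bf_mul m hm]
  have h2 : (0:ℚ) ≤ if m ≤ n then coeff (R := ℚ) (n - m) (Bf m * ψ) else 0 := by
    split
    · exact NN_mul (NN_Bf m hm) hψ _
    · exact le_refl 0
  linarith

private lemma NN_Bf_pow_mul (m k : ℕ) (hm : 1 ≤ m) {ψ : PowerSeries ℚ} (hψ : NN ψ) :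
    NN (Bf m ^ k * ψ) := by
  induction k with
  | zero => simpa using hψ
  | succ k ih =>
    have e : Bf m ^ (k+1) * ψ = Bf m * (Bf m ^ k * ψ) := by ring
    rw [e]
    exact NN_mul (NN_Bf m hm) ih

private lemma NN_Bf_pow (m k : ℕ) (hm : 1 ≤ m) : NN (Bf m ^ k) := by
  have := NN_Bf_pow_mul m k hm NN_one
  simpa using this

private lemma NN_prod (k : ℕ) (s : Finset ℕ) (hs : ∀ m ∈ s, 1 ≤ m) :
    NN (∏ m ∈ s, Bf m ^ k) :=
  Finset.prod_induction _ NN (fun _ _ => NN_mul) NN_one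
    (fun m hm => NN_Bf_pow m k (hs m hm))

private lemma mono_Bf_pow (m k : ℕ) (hm : 1 ≤ m) {ψ : PowerSeries ℚ} (hψ : NN ψ) (n : ℕ) :
    coeff (R := ℚ) n ψ ≤ coeff (R := ℚ) n (Bf m ^ k * ψ) := by
  induction k with
  | zero => simp
  | succ k ih =>
    have e : Bf m ^ (k+1) * ψ = Bf m * (Bf m ^ k * ψ) := by ring
    rw [e]
    exact ih.trans (mono_Bf m hm (NN_Bf_pow_mul m k hm hψ) n)

private lemma powStep (m k : ℕ) (hm : 1 ≤ m) {ψ : PowerSeries ℚ} (hψ : NN ψ) (n : ℕ) :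
    coeff (R := ℚ) n (Bf m ^ k * ψ) ≤
      coeff (R := ℚ) n ψ + k * (if m ≤ n then coeff (R := ℚ) (n - m) (Bf m ^ k * ψ) else 0) := by
  induction k with
  | zero => simp
  | succ k ih =>
    have e : Bf m ^ (k+1) * ψ = Bf m * (Bf m ^ k * ψ) := by ring
    have e2 : coeff (R := ℚ) n (Bf m ^ (k+1) * ψ) = coeff (R := ℚ) n (Bf m ^ k * ψ)
        + (if m ≤ n then coeff (R := ℚ) (n - m) (Bf m ^ (k+1) * ψ) else 0) := by
      rw [e, coeff_Bf_mul m hm, ← e]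
    have hmono : (if m ≤ n then coeff (R := ℚ) (n - m) (Bf m ^ k * ψ) else 0)
        ≤ (if m ≤ n then coeff (R := ℚ) (n - m) (Bf m ^ (k+1) * ψ) else 0) := by
      split
      · rw [e]; exact mono_Bf m hm (NN_Bf_pow_mul m k hm hψ) _
      · exact le_refl 0
    push_cast
    nlinarith [ih, hmono, e2]

private lemma keyFin (k : ℕ) :
    ∀ s : Finset ℕ, (∀ m ∈ s, 1 ≤ m) → ∀ n : ℕ,
    coeff (R := ℚ) n (∏ m ∈ s, Bf m ^ k) ≤
      (if n = 0 then 1 else 0) +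
        ∑ m ∈ s, k * (if m ≤ n then coeff (R := ℚ) (n - m) (∏ m ∈ s, Bf m ^ k) else 0) := by
  intro s
  induction s using Finset.induction_on with
  | empty => intro _ n; simp [coeff_one]
  | insert a s ha ih =>
    intro hs n
    have ha1 : 1 ≤ a := hs a (mem_insert_self a s)
    have hs' : ∀ m ∈ s, 1 ≤ m := fun m hm => hs m (mem_insert_of_mem hm)
    have hNNP : NN (∏ m ∈ s, Bf m ^ k) := NN_prod k s hs'
    rw [Finset.prod_insert ha, Finset.sum_insert ha]
    have h1 := powStep a k ha1 hNNP n
    have h2 := ih hs' n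
    have h3 : ∑ m ∈ s, k * (if m ≤ n then coeff (R := ℚ) (n - m) (∏ m ∈ s, Bf m ^ k) else 0)
        ≤ ∑ m ∈ s, k * (if m ≤ n then coeff (R := ℚ) (n - m) (Bf a ^ k * ∏ m ∈ s, Bf m ^ k) else 0) := by
      apply Finset.sum_le_sum
      intro m hm
      apply mul_le_mul_of_nonneg_left _ (by positivity)
      split
      · exact mono_Bf_pow a k ha1 hNNP _
      · exact le_refl 0
    linarith

/-- If `f(q) = -1 + ∑_{n≥1} a n qⁿ` with all `a n > 0`, `a 1 > k` and
`a n > k` for `n ≥ 2`, then every coefficient of `qⁿ` for `n ≥ 1` in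
`f(q) / ∏_{m=1}^∞ (1 - qᵐ)^k` is positive.  (The coefficient of `qⁿ` of the infinite
product only depends on the factors with `m ≤ n`, so the product is truncated at `n`.) -/
theorem stmt_0 (k : ℕ) (hk : 0 < k) (a : ℕ → ℚ)
    (ha : ∀ n, 1 ≤ n → 0 < a n)
    (h1 : (k : ℚ) < a 1)
    (h2 : ∀ n, 2 ≤ n → (k : ℚ) < a n) :
    ∀ n, 1 ≤ n →
      0 < PowerSeries.coeff (R := ℚ) n
        ((PowerSeries.mk fun m => if m = 0 then (-1 : ℚ) else a m) *
          ∏ m ∈ Finset.Icc 1 n, ((1 - (PowerSeries.X : PowerSeries ℚ) ^ m)⁻¹) ^ k) := by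
  intro n hn
  set P : PowerSeries ℚ := ∏ m ∈ Finset.Icc 1 n, Bf m ^ k with hP
  have hPdef : (∏ m ∈ Finset.Icc 1 n, ((1 - (PowerSeries.X : PowerSeries ℚ) ^ m)⁻¹) ^ k) = P := rfl
  rw [hPdef]
  have hIcc : ∀ m ∈ Finset.Icc 1 n, 1 ≤ m := fun m hm => (Finset.mem_Icc.mp hm).1
  have hNNP : NN P := NN_prod k _ hIcc
  -- constant coefficient of P is 1
  have hP0 : coeff (R := ℚ) 0 P = 1 := by
    rw [coeff_zero_eq_constantCoeff, hP, map_prod]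
    apply Finset.prod_eq_one
    intro m hm
    rw [map_pow]
    have : constantCoeff (R := ℚ) (Bf m) = 1 := by
      unfold Bf
      rw [PowerSeries.constantCoeff_inv, constBf m (hIcc m hm)]
      norm_num
    rw [this, one_pow]
  -- key inequality
  have hkey : coeff (R := ℚ) n P ≤ ∑ m ∈ Finset.Icc 1 n, (k : ℚ) * coeff (R := ℚ) (n - m) P := by
    have := keyFin k (Finset.Icc 1 n) hIcc n
    rw [if_neg (by omega)] at this
    refine this.trans_eq ?_
    rw [zero_add]
    apply Finset.sum_congr rfl
    intro m hm
    rw [if_pos (Finset.mem_Icc.mp hm).2]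
  -- expand the product coefficient
  have hmul : coeff (R := ℚ) n
      ((PowerSeries.mk fun m => if m = 0 then (-1 : ℚ) else a m) * P)
      = -coeff (R := ℚ) n P + ∑ i ∈ Finset.range n, a (i + 1) * coeff (R := ℚ) (n - (i + 1)) P := by
    rw [coeff_mul, Finset.Nat.sum_antidiagonal_eq_sum_range_succ_mk,
      Finset.sum_range_succ']
    simp only [coeff_mk]
    have : ∀ i ∈ Finset.range n,
        (if i + 1 = 0 then (-1:ℚ) else a (i+1)) * coeff (R := ℚ) (n - (i+1)) P
        = a (i+1) * coeff (R := ℚ) (n - (i+1)) P := by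
      intro i _
      rw [if_neg (by omega)]
    rw [Finset.sum_congr rfl this]
    simp only [if_true, Nat.sub_zero]
    ring
  rw [hmul]
  -- rewrite the key sum over range n
  have hkey' : coeff (R := ℚ) n P ≤ ∑ i ∈ Finset.range n, (k:ℚ) * coeff (R := ℚ) (n - (i+1)) P := by
    refine hkey.trans_eq ?_
    rw [show Finset.Icc 1 n = Finset.Ico 1 (n+1) by rw [Finset.Ico_add_one_right_eq_Icc],
      Finset.sum_Ico_eq_sum_range]
    simp only [Nat.add_sub_cancel]
    apply Finset.sum_congr rfl
    intro i _
    rw [add_comm 1 i]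
  -- strict comparison of the sums
  have hstrict : ∑ i ∈ Finset.range n, (k:ℚ) * coeff (R := ℚ) (n - (i+1)) P
      < ∑ i ∈ Finset.range n, a (i + 1) * coeff (R := ℚ) (n - (i+1)) P := by
    apply Finset.sum_lt_sum
    · intro i hi
      have hai : (k:ℚ) ≤ a (i + 1) := by
        rcases Nat.lt_or_ge i 1 with h | h
        · interval_cases i
          exact h1.le
        · exact (h2 (i+1) (by omega)).le
      exact mul_le_mul_of_nonneg_right hai (hNNP _)
    · refine ⟨n - 1, Finset.mem_range.mpr (by omega), ?_⟩
      have hidx : n - (n - 1 + 1) = 0 := by omega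
      rw [hidx, hP0, mul_one, mul_one]
      rcases Nat.lt_or_ge n 2 with h | h
      · have : n = 1 := by omega
        rw [show n - 1 + 1 = 1 by omega]
        exact h1
      · rw [show n - 1 + 1 = n by omega]
        exact h2 n h
  linarith
end

section
/- Every coefficient of the q-expansion of \theta_3(2\tau)/\eta(\tau)^6 is positive, where \theta_3(2\tau) = \sum_{n\in\mathbb{Z}} q^{n^2} and \eta(\tau)^6 = q^{1/4}\prod_{m\ge 1}(1-q^m)^6. -/
open PowerSeries Finset

lemma inv_one_sub_pow_eq (m : ℕ) (hm : 1 ≤ m) :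
    ((1 - (PowerSeries.X : PowerSeries ℚ) ^ m)⁻¹) =
      PowerSeries.mk (fun k => if m ∣ k then (1 : ℚ) else 0) := by
  rw [PowerSeries.inv_eq_iff_mul_eq_one]
  · ext k
    rw [mul_sub, mul_one, map_sub, PowerSeries.coeff_mul_X_pow']
    rcases Nat.eq_zero_or_pos k with rfl | hk
    · simp [(by omega : ¬ m ≤ 0)]; omega
    · rw [PowerSeries.coeff_one, if_neg hk.ne']
      by_cases h : m ≤ k
      · simp only [if_pos h, PowerSeries.coeff_mk]
        have : m ∣ k ↔ m ∣ k - m := by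
          constructor
          · intro hd; exact (Nat.dvd_sub hd dvd_rfl)
          · intro hd; have := Nat.dvd_add hd (dvd_refl m); rwa [Nat.sub_add_cancel h] at this
        by_cases hd : m ∣ k
        · rw [if_pos hd, if_pos (this.mp hd)]; ring
        · rw [if_neg hd, if_neg (fun h2 => hd (this.mpr h2))]; ring
      · simp only [if_neg h, PowerSeries.coeff_mk, sub_zero]
        rw [if_neg (fun hd => h (Nat.le_of_dvd hk hd))]
  · simp [zero_pow (by omega : m ≠ 0)]

lemma coeff_nonneg_mul {f g : PowerSeries ℚ} (hf : ∀ k, 0 ≤ PowerSeries.coeff (R := ℚ) k f)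
    (hg : ∀ k, 0 ≤ PowerSeries.coeff (R := ℚ) k g) : ∀ k, 0 ≤ PowerSeries.coeff (R := ℚ) k (f * g) := by
  intro k
  rw [PowerSeries.coeff_mul]
  exact Finset.sum_nonneg fun p _ => mul_nonneg (hf _) (hg _)

def Good (f : PowerSeries ℚ) : Prop :=
  (∀ k, 0 ≤ PowerSeries.coeff (R := ℚ) k f) ∧ 0 < PowerSeries.coeff (R := ℚ) 0 f

lemma good_mul {f g : PowerSeries ℚ} (hf : Good f) (hg : Good g) : Good (f * g) := by
  refine ⟨coeff_nonneg_mul hf.1 hg.1, ?_⟩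
  simpa [PowerSeries.coeff_zero_eq_constantCoeff, map_mul] using mul_pos hf.2 hg.2

lemma good_one : Good 1 := ⟨fun k => by
    rcases Nat.eq_zero_or_pos k with rfl | hk
    · simp
    · simp [PowerSeries.coeff_one, hk.ne'], by simp⟩

lemma good_pow {f : PowerSeries ℚ} (hf : Good f) (d : ℕ) : Good (f ^ d) := by
  induction d with
  | zero => simpa using good_one
  | succ d ih => rw [pow_succ]; exact good_mul ih hf

lemma good_inv_one_sub_pow (m : ℕ) (hm : 1 ≤ m) :
    Good ((1 - (PowerSeries.X : PowerSeries ℚ) ^ m)⁻¹) := by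
  rw [inv_one_sub_pow_eq m hm]
  refine ⟨fun k => ?_, ?_⟩
  · simp only [PowerSeries.coeff_mk]; positivity
  · simp

lemma good_prod (n : ℕ) :
    Good (∏ m ∈ Finset.Icc 1 n, ((1 - (PowerSeries.X : PowerSeries ℚ) ^ m)⁻¹) ^ 6) := by
  classical
  refine Finset.prod_induction _ Good (fun _ _ => good_mul) good_one ?_
  intro m hm
  exact good_pow (good_inv_one_sub_pow m (Finset.mem_Icc.mp hm).1) 6

lemma good_theta :
    Good (PowerSeries.mk fun j =>
      ∑ m ∈ Finset.range (j + 1),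
        if j = m ^ 2 then (if m = 0 then (1 : ℚ) else 2) else 0) := by
  constructor
  · intro k
    simp only [PowerSeries.coeff_mk]
    refine Finset.sum_nonneg fun m _ => ?_
    split
    · split <;> norm_num
    · norm_num
  · simp [PowerSeries.coeff_mk]

lemma good_mul_pos {A B : PowerSeries ℚ} (hA : ∀ k, PowerSeries.coeff (R := ℚ) k A = 1)
    (hB : Good B) (n : ℕ) : 0 < PowerSeries.coeff (R := ℚ) n (A * B) := by
  rw [PowerSeries.coeff_mul]
  refine Finset.sum_pos' (fun p _ => mul_nonneg (by rw [hA]; norm_num) (hB.1 _))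
    ⟨(n, 0), by simp, ?_⟩
  rw [hA]
  simpa using hB.2

/-- Every coefficient of the q-expansion of `θ₃(2τ)/η(τ)⁶` is positive.
Up to the overall factor `q^{-1/4}`, this quotient equals
`(1 + 2∑_{m≥1} q^{m²}) · ∏_{m≥1}(1-qᵐ)^{-6}` as a series in integer powers of `q`;
the claim is that all of its coefficients are positive. -/
theorem stmt_8 :
    ∀ n : ℕ,
      0 < PowerSeries.coeff (R := ℚ) n
        ((PowerSeries.mk fun j =>
            ∑ m ∈ Finset.range (j + 1),
              if j = m ^ 2 then (if m = 0 then (1 : ℚ) else 2) else 0) *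
          ∏ m ∈ Finset.Icc 1 n, ((1 - (PowerSeries.X : PowerSeries ℚ) ^ m)⁻¹) ^ 6) := by
  intro n
  set T : PowerSeries ℚ := PowerSeries.mk fun j =>
      ∑ m ∈ Finset.range (j + 1),
        if j = m ^ 2 then (if m = 0 then (1 : ℚ) else 2) else 0 with hTdef
  rcases Nat.eq_zero_or_pos n with rfl | hn
  · exact (good_mul good_theta (good_prod 0)).2
  · have h1 : (1 : ℕ) ∈ Finset.Icc 1 n := Finset.mem_Icc.mpr ⟨le_rfl, hn⟩
    rw [← Finset.mul_prod_erase _ _ h1]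
    set R : PowerSeries ℚ :=
      ∏ m ∈ (Finset.Icc 1 n).erase 1, ((1 - (PowerSeries.X : PowerSeries ℚ) ^ m)⁻¹) ^ 6 with hRdef
    have hR : Good R := by
      refine Finset.prod_induction _ Good (fun _ _ => good_mul) good_one ?_
      intro m hm
      exact good_pow
        (good_inv_one_sub_pow m (Finset.mem_Icc.mp (Finset.mem_of_mem_erase hm)).1) 6
    set A : PowerSeries ℚ := (1 - (PowerSeries.X : PowerSeries ℚ) ^ 1)⁻¹ with hAdef
    have key : T * (A ^ 6 * R) = A * (A ^ 5 * (T * R)) := by ring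
    rw [key]
    have hB : Good (A ^ 5 * (T * R)) :=
      good_mul (good_pow (good_inv_one_sub_pow 1 le_rfl) 5) (good_mul good_theta hR)
    have hA : ∀ k, PowerSeries.coeff (R := ℚ) k A = 1 := by
      intro k
      rw [hAdef, inv_one_sub_pow_eq 1 le_rfl]
      simp
    exact good_mul_pos hA hB n
end

section
/- Suppose h(q) = \sum_{n\ge 0} c(n) q^n satisfies c(0) = -1 and c(n) > 4 for all n \ge 1. Then all coefficients of q^n for n \ge 1 in h(q)/\prod_{m\ge1}(1-q^m)^4 are positive. -/
open PowerSeries Finset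

/-- The geometric series `1/(1-X^m) = ∑_{m ∣ k} X^k`. -/
private def geo (m : ℕ) : PowerSeries ℚ :=
  PowerSeries.mk fun k => if m ∣ k then 1 else 0

private lemma geo_mul (m : ℕ) (hm : 1 ≤ m) :
    (1 - (X : PowerSeries ℚ) ^ m) * geo m = 1 := by
  ext k
  rw [sub_mul, one_mul, map_sub, PowerSeries.coeff_X_pow_mul', coeff_one]
  simp only [geo, coeff_mk]
  rcases Nat.eq_zero_or_pos k with rfl | hk
  · have h1 : ¬ m ≤ 0 := by omega
    simp [h1]
  · rw [if_neg (by omega : ¬ k = 0)]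
    by_cases hmk : m ≤ k
    · rw [if_pos hmk]
      have hiff : m ∣ k ↔ m ∣ k - m := by
        constructor
        · intro h; exact Nat.dvd_sub h dvd_rfl
        · intro h
          have := Nat.dvd_add h (dvd_refl m)
          rwa [Nat.sub_add_cancel hmk] at this
      simp only [hiff]
      split_ifs <;> ring
    · rw [if_neg hmk]
      have : ¬ m ∣ k := fun h => hmk (Nat.le_of_dvd hk h)
      simp [this]

private lemma geo_inv (m : ℕ) (hm : 1 ≤ m) :
    ((1 - (X : PowerSeries ℚ) ^ m)⁻¹) = geo m := by
  have hc : constantCoeff (1 - (X : PowerSeries ℚ) ^ m) ≠ 0 := by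
    simp [map_sub, map_pow, constantCoeff_X, zero_pow (by omega : m ≠ 0)]
  rw [PowerSeries.inv_eq_iff_mul_eq_one hc, mul_comm]
  exact geo_mul m hm

/-- Nonnegative coefficients predicate. -/
private def NNc (f : PowerSeries ℚ) : Prop := ∀ k, 0 ≤ coeff k f

private lemma NNc_add {f g : PowerSeries ℚ} (hf : NNc f) (hg : NNc g) : NNc (f + g) :=
  fun k => by rw [map_add]; exact add_nonneg (hf k) (hg k)

private lemma NNc_mul {f g : PowerSeries ℚ} (hf : NNc f) (hg : NNc g) : NNc (f * g) :=
  fun k => by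
    rw [PowerSeries.coeff_mul]
    exact Finset.sum_nonneg fun p _ => mul_nonneg (hf p.1) (hg p.2)

private lemma NNc_one : NNc 1 := fun k => by
  rw [coeff_one]; split <;> norm_num

private lemma NNc_X : NNc (X : PowerSeries ℚ) := fun k => by
  rw [coeff_X]; split <;> norm_num

private lemma NNc_pow {f : PowerSeries ℚ} (hf : NNc f) : ∀ j, NNc (f ^ j) := by
  intro j
  induction j with
  | zero => simpa using NNc_one
  | succ j ih => rw [pow_succ]; exact NNc_mul ih hf

private lemma NNc_C (a : ℚ) (ha : 0 ≤ a) : NNc (PowerSeries.C a) := fun k => by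
  rw [coeff_C]; split_ifs
  · exact ha
  · exact le_refl 0

private lemma NNc_two : NNc (2 : PowerSeries ℚ) := by
  rw [← map_ofNat (PowerSeries.C) 2]; exact NNc_C 2 (by norm_num)

private lemma NNc_three : NNc (3 : PowerSeries ℚ) := by
  rw [← map_ofNat (PowerSeries.C) 3]; exact NNc_C 3 (by norm_num)

private lemma NNc_four : NNc (4 : PowerSeries ℚ) := by
  rw [← map_ofNat (PowerSeries.C) 4]; exact NNc_C 4 (by norm_num)

private lemma NNc_geo (m : ℕ) : NNc (geo m) := fun k => by
  simp only [geo, coeff_mk]; split <;> norm_num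

private lemma NNc_sub_one_mul {f g : PowerSeries ℚ} (hf : NNc (f - 1)) (hg : NNc (g - 1)) :
    NNc (f * g - 1) := by
  have h : f * g - 1 = (f - 1) * (g - 1) + ((f - 1) + (g - 1)) := by ring
  rw [h]
  exact NNc_add (NNc_mul hf hg) (NNc_add hf hg)

private lemma NNc_geo_sub_one (m : ℕ) : NNc (geo m - 1) := fun k => by
  simp only [map_sub, coeff_one, geo, coeff_mk]
  split_ifs with h1 h2 h2
  · norm_num
  · norm_num
  · exact absurd (h2 ▸ dvd_zero m) h1
  · norm_num

private lemma NNc_geo4_sub_one (m : ℕ) : NNc ((geo m) ^ 4 - 1) := by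
  have h1 := NNc_geo_sub_one m
  have h : (geo m) ^ 4 - 1 = geo m * geo m * geo m * geo m - 1 := by ring
  rw [h]
  exact NNc_sub_one_mul (NNc_sub_one_mul (NNc_sub_one_mul h1 h1) h1) h1

private lemma NNc_prod_sub_one (s : Finset ℕ) : NNc ((∏ t ∈ s, (geo t) ^ 4) - 1) := by
  induction s using Finset.induction_on with
  | empty => intro k; simp
  | insert a s h ih =>
      rw [Finset.prod_insert h]
      exact NNc_sub_one_mul (NNc_geo4_sub_one _) ih

private lemma NNc_prod (s : Finset ℕ) : NNc (∏ t ∈ s, (geo t) ^ 4) := by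
  have h := NNc_add (NNc_prod_sub_one s) NNc_one
  simpa using h

private lemma NNc_sum {s : Finset ℕ} {f : ℕ → PowerSeries ℚ} (h : ∀ i ∈ s, NNc (f i)) :
    NNc (∑ i ∈ s, f i) := fun k => by
  rw [map_sum]
  exact Finset.sum_nonneg fun i hi => h i hi k

/-- The crucial algebraic identity:
`4 x S⁴ - S⁴ + 1 = x² (S² + 2S³ + 3S⁴)` where `S = 1/(1-x)`, `x = X^(i+1)`. -/
private lemma geo_identity (i : ℕ) :
    4 * (X : PowerSeries ℚ) ^ (i + 1) * (geo (i + 1)) ^ 4 - (geo (i + 1)) ^ 4 + 1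
      = ((X : PowerSeries ℚ) ^ (i + 1)) ^ 2 *
          ((geo (i + 1)) ^ 2 + 2 * (geo (i + 1)) ^ 3 + 3 * (geo (i + 1)) ^ 4) := by
  have h := geo_mul (i + 1) (by omega)
  linear_combination ((3 * (X : PowerSeries ℚ) ^ (i + 1) - 1) * (geo (i + 1)) ^ 3
      + (2 * (X : PowerSeries ℚ) ^ (i + 1) - 1) * (geo (i + 1)) ^ 2
      - (1 - (X : PowerSeries ℚ) ^ (i + 1)) * geo (i + 1) - 1) * h

/-- If `h(q) = ∑_{n≥0} c n qⁿ` with `c 0 = -1` and `c n > 4` for `n ≥ 1`,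
then all coefficients of `qⁿ` for `n ≥ 1` in `h(q)/∏_{m≥1}(1-qᵐ)⁴` are positive. -/
theorem stmt_9 (c : ℕ → ℚ) (h0 : c 0 = -1) (hc : ∀ n, 1 ≤ n → 4 < c n) :
    ∀ n, 1 ≤ n →
      0 < PowerSeries.coeff n
        ((PowerSeries.mk c) *
          ∏ m ∈ Finset.Icc 1 n, ((1 - (PowerSeries.X : PowerSeries ℚ) ^ m)⁻¹) ^ 4) := by
  intro n hn
  set F : ℕ → PowerSeries ℚ := fun m => ∏ t ∈ Icc 1 m, (geo t) ^ 4 with hF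
  have hprod : (∏ m ∈ Finset.Icc 1 n, ((1 - (PowerSeries.X : PowerSeries ℚ) ^ m)⁻¹) ^ 4) = F n :=
    Finset.prod_congr rfl fun m hm => by rw [geo_inv m (mem_Icc.mp hm).1]
  rw [hprod]
  have hFNN : ∀ m, NNc (F m) := fun m => by simp only [hF]; exact NNc_prod _
  have hF0 : F 0 = 1 := by
    simp only [hF]
    rw [show Finset.Icc 1 0 = (∅ : Finset ℕ) from Finset.Icc_eq_empty (by omega)]
    exact Finset.prod_empty
  have hFsucc : ∀ i : ℕ, F (i + 1) = F i * (geo (i + 1)) ^ 4 := fun i => by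
    simp only [hF]
    exact Finset.prod_Icc_succ_top (by omega) _
  have hIcc : ∀ m : ℕ, Finset.Icc 1 m = Finset.Ioc 0 m := fun m => Finset.Icc_add_one_left_eq_Ioc 0 m
  have hsplit : ∀ i, i < n → F n = F (i + 1) * ∏ t ∈ Ioc (i + 1) n, (geo t) ^ 4 := by
    intro i hi
    simp only [hF, hIcc]
    exact (Finset.prod_Ioc_consecutive _ (Nat.zero_le _) hi).symm
  -- the key coefficientwise inequality, via a telescoping sum of nonneg series
  have hkey : ∀ i, i < n →
      4 * (X : PowerSeries ℚ) ^ (i + 1) * F n - (F (i + 1) - F i)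
        = 4 * (X : PowerSeries ℚ) ^ (i + 1) * (F n - F (i + 1))
          + F i * (((X : PowerSeries ℚ) ^ (i + 1)) ^ 2 *
              ((geo (i + 1)) ^ 2 + 2 * (geo (i + 1)) ^ 3 + 3 * (geo (i + 1)) ^ 4)) := by
    intro i hi
    have h1 := hFsucc i
    have h2 := geo_identity i
    linear_combination (F i) * h2 + (4 * (X : PowerSeries ℚ) ^ (i + 1) - 1) * h1
  have hNN : NNc (∑ i ∈ range n, (4 * (X : PowerSeries ℚ) ^ (i + 1) * F n - (F (i + 1) - F i))) := by
    apply NNc_sum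
    intro i hi
    rw [hkey i (mem_range.mp hi)]
    apply NNc_add
    · have hdiff : F n - F (i + 1) = F (i + 1) * ((∏ t ∈ Ioc (i + 1) n, (geo t) ^ 4) - 1) := by
        rw [hsplit i (mem_range.mp hi)]; ring
      rw [hdiff]
      exact NNc_mul (NNc_mul NNc_four (NNc_pow NNc_X _))
        (NNc_mul (hFNN _) (NNc_prod_sub_one _))
    · refine NNc_mul (hFNN _) (NNc_mul (NNc_pow (NNc_pow NNc_X _) _) ?_)
      exact NNc_add (NNc_add (NNc_pow (NNc_geo _) _)
        (NNc_mul NNc_two (NNc_pow (NNc_geo _) _)))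
        (NNc_mul NNc_three (NNc_pow (NNc_geo _) _))
  have hsum_eq : (∑ i ∈ range n, (4 * (X : PowerSeries ℚ) ^ (i + 1) * F n - (F (i + 1) - F i)))
      = (∑ i ∈ range n, 4 * (X : PowerSeries ℚ) ^ (i + 1) * F n) - (F n - 1) := by
    rw [Finset.sum_sub_distrib, Finset.sum_range_sub (fun m => F m), hF0]
  rw [hsum_eq] at hNN
  have h4 : ∀ i, i < n → coeff n (4 * (X : PowerSeries ℚ) ^ (i + 1) * F n)
      = 4 * coeff (n - (i + 1)) (F n) := by
    intro i hi
    rw [show (4 : PowerSeries ℚ) * (X : PowerSeries ℚ) ^ (i + 1) * F n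
        = PowerSeries.C 4 * ((X : PowerSeries ℚ) ^ (i + 1) * F n) by
      rw [← map_ofNat (PowerSeries.C) 4, mul_assoc]]
    rw [PowerSeries.coeff_C_mul, PowerSeries.coeff_X_pow_mul', if_pos (by omega : i + 1 ≤ n)]
  have hA : 0 ≤ (∑ i ∈ range n, 4 * coeff (n - (i + 1)) (F n)) - coeff n (F n) := by
    have := hNN n
    rw [map_sub, map_sub, map_sum, coeff_one, if_neg (by omega : ¬ n = 0)] at this
    rw [Finset.sum_congr rfl (fun i hi => h4 i (mem_range.mp hi))] at this
    linarith
  have hmain : coeff n (PowerSeries.mk c * F n)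
      = ∑ k ∈ range (n + 1), c k * coeff (n - k) (F n) := by
    rw [PowerSeries.coeff_mul, Finset.Nat.sum_antidiagonal_eq_sum_range_succ_mk]
    simp [coeff_mk]
  rw [hmain, Finset.sum_range_succ' (fun k => c k * coeff (n - k) (F n)) n]
  have hp0 : coeff 0 (F n) = 1 := by
    simp only [hF]
    rw [PowerSeries.coeff_zero_eq_constantCoeff, map_prod]
    apply Finset.prod_eq_one
    intro t _
    rw [map_pow]
    have : constantCoeff (geo t) = 1 := by
      rw [← PowerSeries.coeff_zero_eq_constantCoeff]
      simp [geo, coeff_mk]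
    rw [this, one_pow]
  have hlt : (∑ i ∈ range n, 4 * coeff (n - (i + 1)) (F n))
      < ∑ i ∈ range n, c (i + 1) * coeff (n - (i + 1)) (F n) := by
    apply Finset.sum_lt_sum
    · intro i _
      exact mul_le_mul_of_nonneg_right (hc (i + 1) (by omega)).le (hFNN n _)
    · refine ⟨n - 1, Finset.mem_range.mpr (by omega), ?_⟩
      rw [show n - 1 + 1 = n by omega, Nat.sub_self, hp0, mul_one, mul_one]
      exact hc n hn
  rw [h0, Nat.sub_zero]
  linarith [hA, hlt]
end
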